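/- Let 𝒯 be a tree of dyadic cubes in ℝⁿ, let μ be a Radon measure on ℝⁿ, let V be an m-dimensional linear subspace of ℝⁿ, let α ∈ (0,∞), and let X = X(V,α). If μ(R) = 0 for every Q ∈ 𝒯 and every R ∈ 𝒯 ∩ Δ*_{Q,X}, then there exists a Lipschitz function f : V → V⊥ with Lipschitz constant at most α such that μ(Leaves(𝒯) \ Graph(f)) = 0. -/

import Mathlib

open MeasureTheory Metric Set
open scoped ENNReal NNReal

noncomputable section

abbrev E (n : ℕ) := EuclideanSpace ℝ (Fin n)

/-- The bad cone `X(V,α) = {x : dist(x,V) > α · dist(x,V^⊥)}`. -/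
def badCone {n : ℕ} (V : Submodule ℝ (E n)) (α : ℝ) : Set (E n) :=
  {x | α * Metric.infDist x (Vᗮ : Set (E n)) < Metric.infDist x (V : Set (E n))}

/-- The translated bad cone `X_x = x + X(V,α)`. -/
def badConeAt {n : ℕ} (V : Submodule ℝ (E n)) (α : ℝ) (x : E n) : Set (E n) :=
  {y | y - x ∈ badCone V α}

/-- `f` has Lipschitz constant at most `α`. -/
def LipBound {n : ℕ} (V : Submodule ℝ (E n)) (α : ℝ) (f : V → Vᗮ) : Prop :=
  ∀ v w : V, dist (f v) (f w) ≤ α * dist v w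

/-- The graph of `f : V → V^⊥`, as a subset of `ℝⁿ`. -/
def graphOf {n : ℕ} (V : Submodule ℝ (E n)) (f : V → Vᗮ) : Set (E n) :=
  {x | ∃ v : V, x = (v : E n) + (f v : E n)}

/-- A half-open dyadic cube, described by generation `k` and corner coordinates `j`. -/
structure DyadicCube (n : ℕ) where
  k : ℤ
  j : Fin n → ℤ

namespace DyadicCube

/-- Side length `2^{-k}`. -/
def side {n : ℕ} (Q : DyadicCube n) : ℝ := 2 ^ (-Q.k)

/-- The cube as a subset of `ℝⁿ`. -/
def toSet {n : ℕ} (Q : DyadicCube n) : Set (E n) :=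
  {x | ∀ i, (Q.j i : ℝ) * Q.side ≤ x i ∧ x i < ((Q.j i : ℝ) + 1) * Q.side}

/-- The geometric center of the cube. -/
def center {n : ℕ} (Q : DyadicCube n) : E n :=
  (EuclideanSpace.equiv (Fin n) ℝ).symm fun i => ((Q.j i : ℝ) + 1 / 2) * Q.side

/-- The diameter `√n · side Q`. -/
def diam {n : ℕ} (Q : DyadicCube n) : ℝ := Real.sqrt n * Q.side

end DyadicCube

/-- The radius `r_{Q,X} = 81 √n max(α,1/α) side Q`. -/
def coneRadius {n : ℕ} (α : ℝ) (Q : DyadicCube n) : ℝ :=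
  81 * Real.sqrt n * max α α⁻¹ * Q.side

/-- The conical annulus `A_{Q,X} = X_Q ∩ B̄(x_Q,r_{Q,X}) \ U(x_Q,r_{Q,X}/3)`. -/
def conAnnulus {n : ℕ} (V : Submodule ℝ (E n)) (α : ℝ) (Q : DyadicCube n) : Set (E n) :=
  ((⋃ x ∈ Q.toSet, badConeAt V α x) ∩ closedBall Q.center (coneRadius α Q)) \
    ball Q.center (coneRadius α Q / 3)

/-- The discretized conical annulus `Δ*_{Q,X}`. -/
def discAnnulus {n : ℕ} (V : Submodule ℝ (E n)) (α : ℝ) (Q : DyadicCube n) :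
    Set (DyadicCube n) :=
  {R | R.side = Q.side ∧ (R.toSet ∩ conAnnulus V α Q).Nonempty}

/-- The conical defect `Defect(μ,Q,X)`. -/
def defect {n : ℕ} (μ : Measure (E n)) (V : Submodule ℝ (E n)) (α : ℝ)
    (Q : DyadicCube n) : ℝ≥0∞ :=
  if μ Q.toSet = 0 then 0
  else ∑' R : discAnnulus V α Q, μ (R : DyadicCube n).toSet / μ Q.toSet

/-- The conical Dini function `G_{μ,X}(x)`. -/
def dini {n : ℕ} (μ : Measure (E n)) (V : Submodule ℝ (E n)) (α : ℝ) (x : E n) : ℝ≥0∞ :=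
  ∑' Q : {Q : DyadicCube n // Q.side ≤ 1 ∧ x ∈ Q.toSet}, defect μ V α Q.1

/-- `gap(S,T) = inf {|s-t| : s ∈ S, t ∈ T}` (with value `∞` if either set is empty). -/
def gap {n : ℕ} (S T : Set (E n)) : ℝ≥0∞ :=
  ⨅ (s : S) (t : T), edist (s : E n) (t : E n)

/-- `excess(S,T) = sup_{s∈S} inf_{t∈T} |s-t|` (with `excess(∅,T) = 0`). -/
def excess {n : ℕ} (S T : Set (E n)) : ℝ≥0∞ :=
  ⨆ s : S, ⨅ t : T, edist (s : E n) (t : E n)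

/-- `S` is a tree of dyadic cubes with top cube `top`. -/
def IsDyadicTree {n : ℕ} (S : Set (DyadicCube n)) (top : DyadicCube n) : Prop :=
  top ∈ S ∧ (∀ Q ∈ S, Q.toSet ⊆ top.toSet) ∧
    ∀ Q ∈ S, ∀ P : DyadicCube n, Q.toSet ⊆ P.toSet → P.toSet ⊆ top.toSet → P ∈ S

/-- The set of leaves of a family `S` of dyadic cubes with top cube `top`:
the union over infinite branches of the intersections along the branch. -/
def leavesOf {n : ℕ} (top : DyadicCube n) (S : Set (DyadicCube n)) : Set (E n) :=
  {x | ∃ β : ℕ → DyadicCube n, (∀ i, β i ∈ S) ∧ (∀ i, (β i).k = top.k + i) ∧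
    (∀ i, (β (i + 1)).toSet ⊆ (β i).toSet) ∧ ∀ i, x ∈ (β i).toSet}

/-- `Γ` is an `m`-dimensional Lipschitz graph in `ℝⁿ`. -/
def IsLipGraph (n m : ℕ) (Γ : Set (E n)) : Prop :=
  ∃ (V : Submodule ℝ (E n)) (f : V → Vᗮ) (L : ℝ),
    Module.finrank ℝ V = m ∧ 0 ≤ L ∧ LipBound V L f ∧ Γ = graphOf V f

/-- `μ` is carried by `m`-dimensional Lipschitz graphs. -/
def CarriedByGraphs (n m : ℕ) (μ : Measure (E n)) : Prop :=
  ∃ Γ : ℕ → Set (E n), (∀ i, IsLipGraph n m (Γ i)) ∧ μ (univ \ ⋃ i, Γ i) = 0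

/-- `μ` is singular to `m`-dimensional Lipschitz graphs. -/
def SingularToGraphs (n m : ℕ) (μ : Measure (E n)) : Prop :=
  ∀ Γ : Set (E n), IsLipGraph n m Γ → μ Γ = 0


local notation "⟪" x ", " y "⟫_ℝ" => @inner ℝ _ _ x y

abbrev orthogonalProjection {𝕜 E : Type*} [RCLike 𝕜] [NormedAddCommGroup E] [InnerProductSpace 𝕜 E]
    (K : Submodule 𝕜 E) [K.HasOrthogonalProjection] : E →L[𝕜] K := K.orthogonalProjectionOnto

theorem orthogonalProjection_orthogonal_val {𝕜 E : Type*} [RCLike 𝕜] [NormedAddCommGroup E]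
    [InnerProductSpace 𝕜 E] {K : Submodule 𝕜 E} [K.HasOrthogonalProjection] (u : E) :
    (orthogonalProjection Kᗮ u : E) = u - orthogonalProjection K u :=
  Submodule.starProjection_orthogonal_val u

theorem orthogonalProjection_minimal {𝕜 E : Type*} [RCLike 𝕜] [NormedAddCommGroup E]
    [InnerProductSpace 𝕜 E] {U : Submodule 𝕜 E} [U.HasOrthogonalProjection] (y : E) :
    ‖y - orthogonalProjection U y‖ = ⨅ x : U, ‖y - x‖ :=
  Submodule.starProjection_minimal y

section Kirszbraun
variable {EE FF : Type*} [NormedAddCommGroup EE] [InnerProductSpace ℝ EE]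
  [NormedAddCommGroup FF] [InnerProductSpace ℝ FF] [FiniteDimensional ℝ FF]

set_option maxHeartbeats 1000000 in
theorem kirszbraun_finset {ι : Type*} (s : Finset ι) (x : ι → EE) (y : ι → FF) (r : ι → ℝ)
    (z : EE) (hz : ∀ i ∈ s, dist z (x i) ≤ r i)
    (hxy : ∀ i ∈ s, ∀ j ∈ s, dist (y i) (y j) ≤ dist (x i) (x j)) :
    ∃ w : FF, ∀ i ∈ s, dist w (y i) ≤ r i := by
  classical
  rcases s.eq_empty_or_nonempty with rfl | hs
  · exact ⟨0, by simp⟩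
  set φ : FF → ℝ := fun w => s.sup' hs fun i => ‖w - y i‖ ^ 2 - r i ^ 2 with hφdef
  have hφc : Continuous φ := by
    rw [continuous_iff_continuousAt]
    intro w
    exact ContinuousAt.finset_sup'_apply hs fun i _ =>
      (((continuous_id.sub continuous_const).norm.pow 2).sub continuous_const).continuousAt
  obtain ⟨i₀, hi₀⟩ := hs.exists_mem
  set B := φ (y i₀) with hB
  have hrnn : ∀ i ∈ s, 0 ≤ r i := fun i hi => le_trans dist_nonneg (hz i hi)
  have hBr : 0 ≤ B + r i₀ ^ 2 := by
    have : ‖y i₀ - y i₀‖ ^ 2 - r i₀ ^ 2 ≤ B :=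
      Finset.le_sup' (fun i => ‖y i₀ - y i‖ ^ 2 - r i ^ 2) hi₀
    simp only [sub_self, norm_zero] at this; nlinarith
  set ρ := Real.sqrt (B + r i₀ ^ 2) + 1 with hρ
  have hρ0 : 0 < ρ := by positivity
  have hout : ∀ w : FF, w ∉ closedBall (y i₀) ρ → B < φ w := by
    intro w hw
    have h1 : ρ < ‖w - y i₀‖ := by
      simpa [dist_eq_norm] using (not_le.1 (fun hc => hw (mem_closedBall.2 hc)))
    have h2 : B + r i₀ ^ 2 < ‖w - y i₀‖ ^ 2 := by
      have := Real.sq_sqrt hBr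
      nlinarith [Real.sqrt_nonneg (B + r i₀ ^ 2)]
    have h3 : ‖w - y i₀‖ ^ 2 - r i₀ ^ 2 ≤ φ w :=
      Finset.le_sup' (fun i => ‖w - y i‖ ^ 2 - r i ^ 2) hi₀
    linarith
  obtain ⟨w₀, hw₀mem, hw₀⟩ := (isCompact_closedBall (y i₀) ρ).exists_isMinOn
    ⟨y i₀, mem_closedBall_self hρ0.le⟩ hφc.continuousOn
  have hglob : ∀ w : FF, φ w₀ ≤ φ w := by
    intro w
    by_cases hw : w ∈ closedBall (y i₀) ρ
    · exact hw₀ hw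
    · exact le_trans (hw₀ (mem_closedBall_self hρ0.le)) (hout w hw).le
  set m := φ w₀ with hm
  by_cases hm0 : m ≤ 0
  · refine ⟨w₀, fun i hi => ?_⟩
    have h1 : ‖w₀ - y i‖ ^ 2 - r i ^ 2 ≤ m :=
      Finset.le_sup' (fun i => ‖w₀ - y i‖ ^ 2 - r i ^ 2) hi
    have h2 : ‖w₀ - y i‖ ^ 2 ≤ r i ^ 2 := by linarith
    have := hrnn i hi
    rw [dist_eq_norm]
    nlinarith [norm_nonneg (w₀ - y i)]
  push_neg at hm0
  exfalso
  set I := s.filter (fun i => ‖w₀ - y i‖ ^ 2 - r i ^ 2 = m) with hI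
  have hInem : I.Nonempty := by
    obtain ⟨i₁, hi₁, hieq⟩ := Finset.exists_mem_eq_sup' hs (fun i => ‖w₀ - y i‖ ^ 2 - r i ^ 2)
    exact ⟨i₁, Finset.mem_filter.2 ⟨hi₁, hieq.symm⟩⟩
  set T := I.image (fun i => w₀ - y i) with hT
  have hTnem : T.Nonempty := hInem.image _
  have h0T : (0 : FF) ∈ convexHull ℝ (T : Set FF) := by
    by_contra h0
    obtain ⟨f, u, hfu, hu0⟩ := geometric_hahn_banach_closed_point
      (convex_convexHull ℝ (T : Set FF)) (T.finite_toSet.isClosed_convexHull ℝ) h0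
    rw [map_zero] at hu0
    set d := (InnerProductSpace.toDual ℝ FF).symm f with hd
    have hdi : ∀ a ∈ (T : Set FF), ⟪d, a⟫_ℝ < u := by
      intro a ha
      have := hfu a (subset_convexHull ℝ _ ha)
      rwa [← InnerProductSpace.toDual_symm_apply] at this
    have hiu : ∀ i ∈ I, ⟪d, w₀ - y i⟫_ℝ < u := fun i hi =>
      hdi _ (by exact_mod_cast Finset.mem_image_of_mem _ hi)
    have hdne : d ≠ 0 := by
      intro hd0
      obtain ⟨i, hi⟩ := hInem
      have h' := hiu i hi
      rw [hd0, inner_zero_left] at h'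
      linarith
    clear_value d
    set D := s.sup' hs (fun i => |⟪d, w₀ - y i⟫_ℝ|) with hD
    have hDle : ∀ i ∈ s, |⟪d, w₀ - y i⟫_ℝ| ≤ D := fun i hi =>
      Finset.le_sup' (fun i => |⟪d, w₀ - y i⟫_ℝ|) hi
    have hD0 : 0 ≤ D := le_trans (abs_nonneg _) (hDle i₀ hi₀)
    clear_value D
    set ε : ℝ := if hJ : (s \ I).Nonempty then
        (s \ I).inf' hJ (fun i => m - (‖w₀ - y i‖ ^ 2 - r i ^ 2)) else 1 with hε
    have hε0 : 0 < ε := by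
      rw [hε]
      split_ifs with hJ
      · apply (Finset.lt_inf'_iff _).2
        intro i hi
        rw [Finset.mem_sdiff] at hi
        have h1 : ‖w₀ - y i‖ ^ 2 - r i ^ 2 ≤ m :=
      Finset.le_sup' (fun i => ‖w₀ - y i‖ ^ 2 - r i ^ 2) hi.1
        have h2 : ‖w₀ - y i‖ ^ 2 - r i ^ 2 ≠ m := fun hc =>
          hi.2 (Finset.mem_filter.2 ⟨hi.1, hc⟩)
        have := lt_of_le_of_ne h1 h2
        linarith
      · norm_num
    set t : ℝ := min (min 1 ((-u) / (‖d‖ ^ 2 + 1))) (ε / (2 * D + ‖d‖ ^ 2 + 1)) with ht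
    have hu' : 0 < -u := by linarith
    have ht0 : 0 < t := by
      apply lt_min (lt_min one_pos _) <;> positivity
    have ht1 : t ≤ 1 := le_trans (min_le_left _ _) (min_le_left _ _)
    have htu : t ≤ (-u) / (‖d‖ ^ 2 + 1) := le_trans (min_le_left _ _) (min_le_right _ _)
    have htε : t ≤ ε / (2 * D + ‖d‖ ^ 2 + 1) := min_le_right _ _
    clear_value t
    have hkey : ∀ i ∈ s, ‖(w₀ + t • d) - y i‖ ^ 2 - r i ^ 2 < m := by
      intro i hi
      have hexp : ‖(w₀ + t • d) - y i‖ ^ 2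
          = ‖w₀ - y i‖ ^ 2 + 2 * (t * ⟪d, w₀ - y i⟫_ℝ) + t ^ 2 * ‖d‖ ^ 2 := by
        have : (w₀ + t • d) - y i = (w₀ - y i) + t • d := by abel
        rw [this, norm_add_sq_real, real_inner_smul_right, norm_smul]
        simp [real_inner_comm, mul_pow, abs_of_pos ht0]
        try ring
      by_cases hiI : i ∈ I
      · have heq : ‖w₀ - y i‖ ^ 2 - r i ^ 2 = m := (Finset.mem_filter.1 hiI).2
        have hin : ⟪d, w₀ - y i⟫_ℝ < u := hiu i hiI
        have hsmall : t * ‖d‖ ^ 2 < -u := by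
          calc t * ‖d‖ ^ 2 ≤ ((-u) / (‖d‖ ^ 2 + 1)) * ‖d‖ ^ 2 := by
                apply mul_le_mul_of_nonneg_right htu (by positivity)
            _ < -u := by
                rw [div_mul_eq_mul_div, div_lt_iff₀ (by positivity)]
                nlinarith [sq_nonneg ‖d‖]
        nlinarith
      · have hgap : ε ≤ m - (‖w₀ - y i‖ ^ 2 - r i ^ 2) := by
          rw [hε]
          have hisd : i ∈ s \ I := Finset.mem_sdiff.2 ⟨hi, hiI⟩
          rw [dif_pos ⟨i, hisd⟩]
          exact Finset.inf'_le _ hisd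
        have habs : |⟪d, w₀ - y i⟫_ℝ| ≤ D := hDle i hi
        have hb : t * (2 * D + ‖d‖ ^ 2) < ε := by
          calc t * (2 * D + ‖d‖ ^ 2) ≤ (ε / (2 * D + ‖d‖ ^ 2 + 1)) * (2 * D + ‖d‖ ^ 2) := by
                apply mul_le_mul_of_nonneg_right htε (by positivity)
            _ < ε := by
                rw [div_mul_eq_mul_div, div_lt_iff₀ (by positivity)]
                nlinarith
        have h1 : t * ⟪d, w₀ - y i⟫_ℝ ≤ t * D :=
          mul_le_mul_of_nonneg_left (le_trans (le_abs_self _) habs) ht0.le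
        nlinarith [sq_nonneg ‖d‖, mul_le_mul_of_nonneg_left ht1 (mul_pos ht0 (by positivity : (0:ℝ) < ‖d‖^2 + 1)).le]
      -- end
    have : φ (w₀ + t • d) < m := (Finset.sup'_lt_iff hs).2 hkey
    exact absurd (hglob (w₀ + t • d)) (not_le.2 this)
  rw [Finset.convexHull_eq] at h0T
  obtain ⟨c, hc0, hc1, hcm⟩ := h0T
  rw [Finset.centerMass_eq_of_sum_1 _ _ hc1] at hcm
  simp only [id] at hcm
  set ia : FF → ι := fun a =>
    if h : ∃ i, i ∈ I ∧ w₀ - y i = a then h.choose else i₀ with hia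
  have hiaI : ∀ a ∈ T, ia a ∈ I ∧ w₀ - y (ia a) = a := by
    intro a ha
    rcases Finset.mem_image.1 ha with ⟨i, hi, hie⟩
    have hex : ∃ i, i ∈ I ∧ w₀ - y i = a := ⟨i, hi, hie⟩
    rw [hia]
    simp only [dif_pos hex]
    exact hex.choose_spec
  set v : FF → EE := fun a => z - x (ia a) with hv
  have hIs : ∀ i ∈ I, i ∈ s := fun i hi => (Finset.mem_filter.1 hi).1
  have key : ∀ a ∈ T, ∀ b ∈ T, m + ⟪v a, v b⟫_ℝ ≤ ⟪a, b⟫_ℝ := by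
    intro a ha b hb
    obtain ⟨haI, hae⟩ := hiaI a ha
    obtain ⟨hbI, hbe⟩ := hiaI b hb
    have hA : ‖a‖ ^ 2 - r (ia a) ^ 2 = m := by
      have := (Finset.mem_filter.1 haI).2
      rwa [hae] at this
    have hB : ‖b‖ ^ 2 - r (ia b) ^ 2 = m := by
      have := (Finset.mem_filter.1 hbI).2
      rwa [hbe] at this
    have hab : ‖a - b‖ ≤ ‖x (ia b) - x (ia a)‖ := by
      have he : a - b = y (ia b) - y (ia a) := by
        calc a - b = (w₀ - y (ia a)) - (w₀ - y (ia b)) := by rw [hae, hbe]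
          _ = y (ia b) - y (ia a) := by abel
      rw [he]
      have := hxy (ia b) (hIs _ hbI) (ia a) (hIs _ haI)
      simpa [dist_eq_norm] using this
    have hab2 : ‖a - b‖ ^ 2 ≤ ‖x (ia b) - x (ia a)‖ ^ 2 :=
      pow_le_pow_left₀ (norm_nonneg _) hab 2
    have e1 : ‖a - b‖ ^ 2 = ‖a‖ ^ 2 - 2 * ⟪a, b⟫_ℝ + ‖b‖ ^ 2 := norm_sub_sq_real a b
    have e2 : x (ia b) - x (ia a) = v a - v b := by rw [hv]; simp only; abel
    have e3 : ‖v a - v b‖ ^ 2 = ‖v a‖ ^ 2 - 2 * ⟪v a, v b⟫_ℝ + ‖v b‖ ^ 2 :=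
      norm_sub_sq_real _ _
    have hva : ‖v a‖ ≤ r (ia a) := by
      rw [hv]; simpa [dist_eq_norm] using hz _ (hIs _ haI)
    have hvb : ‖v b‖ ≤ r (ia b) := by
      rw [hv]; simpa [dist_eq_norm] using hz _ (hIs _ hbI)
    have hva2 : ‖v a‖ ^ 2 ≤ r (ia a) ^ 2 := pow_le_pow_left₀ (norm_nonneg _) hva 2
    have hvb2 : ‖v b‖ ^ 2 ≤ r (ia b) ^ 2 := pow_le_pow_left₀ (norm_nonneg _) hvb 2
    rw [e2] at hab2
    linarith
  have hexp : ⟪∑ a ∈ T, c a • a, ∑ b ∈ T, c b • b⟫_ℝ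
      = ∑ a ∈ T, ∑ b ∈ T, (c a * c b) * ⟪a, b⟫_ℝ := by
    rw [sum_inner]
    refine Finset.sum_congr rfl fun a _ => ?_
    rw [inner_sum]
    refine Finset.sum_congr rfl fun b _ => ?_
    rw [real_inner_smul_left, real_inner_smul_right]; ring
  have hsum0 : ∑ a ∈ T, ∑ b ∈ T, (c a * c b) * ⟪a, b⟫_ℝ = 0 := by
    rw [← hexp, hcm, inner_zero_left]
  have hlow : ∑ a ∈ T, ∑ b ∈ T, (c a * c b) * (m + ⟪v a, v b⟫_ℝ)
      ≤ ∑ a ∈ T, ∑ b ∈ T, (c a * c b) * ⟪a, b⟫_ℝ :=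
    Finset.sum_le_sum fun a ha => Finset.sum_le_sum fun b hb =>
      mul_le_mul_of_nonneg_left (key a ha b hb) (mul_nonneg (hc0 a ha) (hc0 b hb))
  have hsplit : ∑ a ∈ T, ∑ b ∈ T, (c a * c b) * (m + ⟪v a, v b⟫_ℝ)
      = m + ‖∑ a ∈ T, c a • v a‖ ^ 2 := by
    have h1 : ∑ a ∈ T, ∑ b ∈ T, (c a * c b) * (m + ⟪v a, v b⟫_ℝ)
        = ∑ a ∈ T, ((c a * m) * ∑ b ∈ T, c b
            + ∑ b ∈ T, (c a * c b) * ⟪v a, v b⟫_ℝ) := by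
      refine Finset.sum_congr rfl fun a _ => ?_
      rw [Finset.mul_sum, ← Finset.sum_add_distrib]
      refine Finset.sum_congr rfl fun b _ => by ring
    rw [h1, Finset.sum_add_distrib]
    have h2 : ∑ a ∈ T, (c a * m) * ∑ b ∈ T, c b = m := by
      rw [hc1]
      rw [← Finset.sum_mul, ← Finset.sum_mul, hc1]
      ring
    have h3 : ∑ a ∈ T, ∑ b ∈ T, (c a * c b) * ⟪v a, v b⟫_ℝ
        = ‖∑ a ∈ T, c a • v a‖ ^ 2 := by
      rw [← real_inner_self_eq_norm_sq, sum_inner]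
      refine Finset.sum_congr rfl fun a _ => ?_
      rw [inner_sum]
      refine Finset.sum_congr rfl fun b _ => ?_
      rw [real_inner_smul_left, real_inner_smul_right]; ring
    rw [h2, h3]
  nlinarith [sq_nonneg ‖∑ a ∈ T, c a • v a‖, hlow, hsplit, hsum0]


theorem kirszbraun_onePoint (G : Set (EE × FF))
    (hG : ∀ p ∈ G, ∀ q ∈ G, dist p.2 q.2 ≤ dist p.1 q.1) (p : EE) :
    ∃ w : FF, ∀ q ∈ G, dist w q.2 ≤ dist p q.1 := by
  classical
  rcases G.eq_empty_or_nonempty with rfl | ⟨q₀, hq₀⟩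
  · exact ⟨0, by simp⟩
  set C : G → Set FF := fun q => closedBall (q : EE × FF).2 (dist p (q : EE × FF).1) with hC
  by_contra hcon
  push_neg at hcon
  have hempty : (C ⟨q₀, hq₀⟩) ∩ ⋂ q : G, C q = ∅ := by
    rw [Set.eq_empty_iff_forall_notMem]
    rintro w ⟨-, hw2⟩
    obtain ⟨q, hq, hlt⟩ := hcon w
    have : w ∈ C ⟨q, hq⟩ := Set.mem_iInter.1 hw2 ⟨q, hq⟩
    rw [hC] at this
    exact absurd (mem_closedBall.1 this) (not_le.2 hlt)
  obtain ⟨t, ht⟩ := (isCompact_closedBall _ _).elim_finite_subfamily_closed C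
    (fun q => isClosed_closedBall) hempty
  obtain ⟨w, hw⟩ := kirszbraun_finset (insert ⟨q₀, hq₀⟩ t)
    (fun q : G => (q : EE × FF).1) (fun q : G => (q : EE × FF).2)
    (fun q : G => dist p (q : EE × FF).1) p
    (fun q _ => le_refl _) (fun q _ q' _ => hG _ q.2 _ q'.2)
  have hwmem : w ∈ (C ⟨q₀, hq₀⟩) ∩ ⋂ q ∈ t, C q := by
    constructor
    · exact mem_closedBall.2 (hw _ (Finset.mem_insert_self _ _))
    · exact Set.mem_iInter₂.2 fun q hq =>
        mem_closedBall.2 (hw q (Finset.mem_insert_of_mem hq))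
  rw [ht] at hwmem
  exact hwmem

theorem kirszbraun_extend (G : Set (EE × FF))
    (hG : ∀ p ∈ G, ∀ q ∈ G, dist p.2 q.2 ≤ dist p.1 q.1) :
    ∃ f : EE → FF, (∀ v w : EE, dist (f v) (f w) ≤ dist v w) ∧ ∀ q ∈ G, f q.1 = q.2 := by
  classical
  set S : Set (Set (EE × FF)) := {H | ∀ p ∈ H, ∀ q ∈ H, dist p.2 q.2 ≤ dist p.1 q.1} with hSdef
  have hchain : ∀ c ⊆ S, IsChain (· ⊆ ·) c → c.Nonempty → ∃ ub ∈ S, ∀ s ∈ c, s ⊆ ub := by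
    intro c hcS hchain _
    refine ⟨⋃₀ c, ?_, fun s hs => Set.subset_sUnion_of_mem hs⟩
    rintro a ⟨H1, hH1, haH1⟩ b ⟨H2, hH2, hbH2⟩
    rcases hchain.total hH1 hH2 with h12 | h21
    · exact hcS hH2 _ (h12 haH1) _ hbH2
    · exact hcS hH1 _ haH1 _ (h21 hbH2)
  obtain ⟨Gm, hGsub, hmaxl⟩ := zorn_subset_nonempty S hchain G hG
  have hGmS : Gm ∈ S := hmaxl.prop
  have hmax : ∀ H ∈ S, Gm ⊆ H → H = Gm := fun H hH hsub => hmaxl.eq_of_ge hH hsub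
  have htot : ∀ v : EE, ∃ w : FF, (v, w) ∈ Gm := by
    intro v
    by_contra hno
    push_neg at hno
    obtain ⟨w, hw⟩ := kirszbraun_onePoint Gm hGmS v
    have hins : insert (v, w) Gm ∈ S := by
      rintro a (rfl | haGm) b (rfl | hbGm)
      · simp
      · simpa [dist_comm] using hw b hbGm
      · simpa [dist_comm] using hw a haGm
      · exact hGmS a haGm b hbGm
    have := hmax _ hins (Set.subset_insert _ _)
    exact hno w (this ▸ Set.mem_insert _ _)
  choose f hf using htot
  refine ⟨f, fun v w => hGmS _ (hf v) _ (hf w), fun q hq => ?_⟩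
  have := hGmS _ (hf q.1) _ (hGsub hq)
  simpa using dist_le_zero.1 (by simpa using this)

theorem kirszbraun_extend' (α : ℝ) (hα : 0 ≤ α) (G : Set (EE × FF))
    (hG : ∀ p ∈ G, ∀ q ∈ G, dist p.2 q.2 ≤ α * dist p.1 q.1) :
    ∃ f : EE → FF, (∀ v w : EE, dist (f v) (f w) ≤ α * dist v w) ∧ ∀ q ∈ G, f q.1 = q.2 := by
  have hsm : ∀ a b : EE, dist (α • a) (α • b) = α * dist a b := by
    intro a b
    rw [dist_smul₀, Real.norm_eq_abs, abs_of_nonneg hα]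
  have hcompat : ∀ a ∈ (fun q : EE × FF => (α • q.1, q.2)) '' G,
      ∀ b ∈ (fun q : EE × FF => (α • q.1, q.2)) '' G, dist a.2 b.2 ≤ dist a.1 b.1 := by
    rintro a ⟨p, hp, rfl⟩ b ⟨q, hq, rfl⟩
    simpa [hsm] using hG p hp q hq
  obtain ⟨g, hg, hgq⟩ := kirszbraun_extend ((fun q : EE × FF => (α • q.1, q.2)) '' G) hcompat
  refine ⟨fun v => g (α • v), fun v w => ?_, fun q hq => ?_⟩
  · calc dist (g (α • v)) (g (α • w)) ≤ dist (α • v) (α • w) := hg _ _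
      _ = α * dist v w := hsm v w
  · exact hgq (α • q.1, q.2) ⟨q, hq, rfl⟩

end Kirszbraun

section Geometry

open Metric Set

local notation "⟪" x ", " y "⟫_ℝ" => @inner ℝ _ _ x y

instance {n : ℕ} : Countable (DyadicCube n) := by
  have hinj : Function.Injective (fun Q : DyadicCube n => (Q.k, Q.j)) := by
    rintro ⟨k, j⟩ ⟨k', j'⟩ h
    simpa [Prod.ext_iff] using h
  exact hinj.countable

theorem DyadicCube.side_pos {n : ℕ} (Q : DyadicCube n) : 0 < Q.side :=
  zpow_pos (by norm_num) _

theorem DyadicCube.center_apply {n : ℕ} (Q : DyadicCube n) (i : Fin n) :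
    Q.center i = ((Q.j i : ℝ) + 1 / 2) * Q.side := rfl

theorem euclid_dist_le {n : ℕ} {x y : E n} {b : ℝ} (hb : 0 ≤ b)
    (h : ∀ i, dist (x i) (y i) ≤ b) : dist x y ≤ Real.sqrt n * b := by
  rw [EuclideanSpace.dist_eq]
  have h1 : ∑ i, dist (x i) (y i) ^ 2 ≤ ∑ _i : Fin n, b ^ 2 :=
    Finset.sum_le_sum fun i _ => pow_le_pow_left₀ dist_nonneg (h i) 2
  have h2 : ∑ _i : Fin n, b ^ 2 = (n : ℝ) * b ^ 2 := by
    rw [Finset.sum_const, Finset.card_univ, Fintype.card_fin, nsmul_eq_mul]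
  calc Real.sqrt (∑ i, dist (x i) (y i) ^ 2) ≤ Real.sqrt ((n : ℝ) * b ^ 2) :=
        Real.sqrt_le_sqrt (by rw [← h2]; exact h1)
    _ = Real.sqrt n * b := by
        rw [Real.sqrt_mul (by positivity), Real.sqrt_sq hb]

theorem DyadicCube.dist_center_le {n : ℕ} {Q : DyadicCube n} {x : E n}
    (hx : x ∈ Q.toSet) : dist x Q.center ≤ Real.sqrt n * (Q.side / 2) := by
  refine euclid_dist_le (by have := Q.side_pos; positivity) fun i => ?_
  obtain ⟨h1, h2⟩ := hx i
  rw [Real.dist_eq, DyadicCube.center_apply, abs_le]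
  constructor <;> nlinarith [Q.side_pos]

theorem DyadicCube.dist_le_of_mem {n : ℕ} {Q : DyadicCube n} {x y : E n}
    (hx : x ∈ Q.toSet) (hy : y ∈ Q.toSet) : dist x y ≤ Real.sqrt n * Q.side := by
  refine euclid_dist_le Q.side_pos.le fun i => ?_
  obtain ⟨h1, h2⟩ := hx i
  obtain ⟨h3, h4⟩ := hy i
  rw [Real.dist_eq, abs_le]
  constructor <;> nlinarith [Q.side_pos]

theorem infDist_submodule {n : ℕ} (W : Submodule ℝ (E n)) (z : E n) :
    Metric.infDist z (W : Set (E n)) = ‖z - (orthogonalProjection W z : E n)‖ := by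
  have hne : (W : Set (E n)).Nonempty := ⟨0, W.zero_mem⟩
  have : Nonempty (W : Set (E n)) := hne.to_subtype
  rw [Metric.infDist_eq_iInf, orthogonalProjection_minimal]
  simp_rw [dist_eq_norm]
  rfl

theorem not_badCone_iff {n : ℕ} (V : Submodule ℝ (E n)) (α : ℝ) (z : E n) :
    z ∉ badCone V α ↔
      ‖(orthogonalProjection Vᗮ z : E n)‖ ≤ α * ‖(orthogonalProjection V z : E n)‖ := by
  have h1 : Metric.infDist z (V : Set (E n)) = ‖(orthogonalProjection Vᗮ z : E n)‖ := by
    rw [infDist_submodule, orthogonalProjection_orthogonal_val]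
  have h2 : Metric.infDist z ((Vᗮ : Submodule ℝ (E n)) : Set (E n))
      = ‖(orthogonalProjection V z : E n)‖ := by
    rw [infDist_submodule]
    congr 1
    rw [orthogonalProjection_orthogonal_val]
    abel
  rw [badCone, Set.mem_setOf_eq, not_lt, h1, h2]

end Geometry

section MainProof

open Metric Set

set_option maxHeartbeats 1000000 in
theorem statement4' {n m : ℕ} (hm : 1 ≤ m) (hmn : m ≤ n - 1)
    (S : Set (DyadicCube n)) (top : DyadicCube n) (hS : IsDyadicTree S top)
    (μ : Measure (E n)) [IsLocallyFiniteMeasure μ]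
    (V : Submodule ℝ (E n)) (hV : Module.finrank ℝ V = m) (α : ℝ) (hα : 0 < α)
    (h : ∀ Q ∈ S, ∀ R ∈ S, R ∈ discAnnulus V α Q → μ R.toSet = 0) :
    ∃ f : V → Vᗮ, LipBound V α f ∧ μ (leavesOf top S \ graphOf V f) = 0 := by
  classical
  obtain ⟨htopS, hsubtop, -⟩ := hS
  have hn : 1 ≤ n := by omega
  have hn0 : (0:ℝ) < Real.sqrt n := Real.sqrt_pos.2 (by exact_mod_cast hn)
  -- the null set
  set N : Set (E n) := ⋃ R ∈ {R : DyadicCube n | R ∈ S ∧ μ R.toSet = 0}, R.toSet with hN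
  have hμN : μ N = 0 := by
    rw [hN]
    refine (measure_biUnion_null_iff (Set.to_countable _)).2 ?_
    rintro R ⟨-, hR0⟩
    exact hR0
  -- constants
  set M := max α α⁻¹ with hM
  have hM1 : 1 ≤ M := by
    rcases le_total α 1 with h1 | h1
    · exact le_max_of_le_right ((one_le_inv_iff₀).2 ⟨hα, h1⟩)
    · exact le_max_of_le_left h1
  set c := Real.sqrt n * M with hc
  have hc1 : Real.sqrt n ≤ c := by nlinarith
  have hc0 : 0 < c := by nlinarith
  -- key geometric fact
  have hgeo : ∀ x ∈ leavesOf top S, ∀ y ∈ leavesOf top S, y ∉ N →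
      (y - x) ∉ badCone V α := by
    intro x hx y hy hyN hbad
    obtain ⟨β, hβS, hβk, hβsub, hβmem⟩ := hx
    obtain ⟨γ, hγS, hγk, hγsub, hγmem⟩ := hy
    set d := dist y x with hd
    have hd0 : 0 < d := by
      rcases eq_or_ne y x with rfl | hne
      · exfalso
        rw [badCone, Set.mem_setOf_eq, sub_self] at hbad
        have h1 : Metric.infDist (0 : E n) (V : Set (E n)) = 0 :=
          Metric.infDist_zero_of_mem V.zero_mem
        have h2 : 0 ≤ Metric.infDist (0 : E n) ((Vᗮ : Submodule ℝ (E n)) : Set (E n)) :=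
          Metric.infDist_nonneg
        nlinarith
      · exact dist_pos.2 hne
    have hxtop : x ∈ top.toSet := by
      have := hsubtop _ (hβS 0) (hβmem 0)
      exact this
    have hytop : y ∈ top.toSet := hsubtop _ (hγS 0) (hγmem 0)
    have hdtop : d ≤ Real.sqrt n * top.side := DyadicCube.dist_le_of_mem hytop hxtop
    have htopside : 0 < top.side := top.side_pos
    -- choose the scale
    set u := d / (29 * c) with hu
    have hu0 : 0 < u := by positivity
    have hex : ∃ i : ℕ, top.side / 2 ^ i ≤ u := by
      obtain ⟨i, hi⟩ := pow_unbounded_of_one_lt (top.side / u) (one_lt_two (α := ℝ))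
      refine ⟨i, ?_⟩
      rw [div_le_iff₀ (by positivity)]
      rw [div_lt_iff₀ hu0] at hi
      nlinarith
    set i := Nat.find hex with hi
    have hile : top.side / 2 ^ i ≤ u := Nat.find_spec hex
    set s := top.side / 2 ^ i with hs
    have hs0 : 0 < s := by positivity
    have hu2s : u < 2 * s := by
      rcases Nat.eq_zero_or_pos i with hi0 | hipos
      · have hsts : s = top.side := by rw [hs, hi0]; simp
        have : u ≤ top.side / 29 := by
          rw [hu, div_le_div_iff₀ (by positivity) (by norm_num)]
          calc d * 29 ≤ Real.sqrt n * top.side * 29 := by nlinarith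
            _ ≤ top.side * (29 * c) := by nlinarith
        nlinarith
      · have hnot : ¬ (top.side / 2 ^ (i - 1) ≤ u) := Nat.find_min hex (by omega)
        push_neg at hnot
        have h2 : (2:ℝ) ^ i = 2 ^ (i - 1) * 2 := by
          rw [← pow_succ]
          congr 1
          omega
        rw [hs, h2]
        calc u < top.side / 2 ^ (i - 1) := hnot
          _ = 2 * (top.side / (2 ^ (i - 1) * 2)) := by
              have h9 : (2:ℝ) ^ (i - 1) ≠ 0 := by positivity
              field_simp

    have hds : 29 * c * s ≤ d := by
      rw [hu, le_div_iff₀ (by positivity)] at hile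
      calc 29 * c * s = s * (29 * c) := by ring
        _ ≤ d := hile
    have hds2 : d < 58 * c * s := by
      rw [hu] at hu2s
      rw [div_lt_iff₀ (by positivity)] at hu2s
      nlinarith
    -- the cubes
    set Q := β i with hQ
    set R := γ i with hR
    have hzpow : ∀ k : ℤ, k = top.k + (i : ℤ) → (2:ℝ) ^ (-k) = s := by
      intro k hk
      rw [hk, hs, show -(top.k + (i:ℤ)) = -top.k - (i:ℤ) by ring,
        zpow_sub₀ (two_ne_zero (α := ℝ)), zpow_natCast, DyadicCube.side]
    have hQside : Q.side = s := hzpow Q.k (hβk i)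
    have hRside : R.side = s := hzpow R.k (hγk i)
    have hrad : coneRadius α Q = 81 * c * s := by
      rw [coneRadius, hQside, hc, hM]
      ring
    have hxQ : x ∈ Q.toSet := hβmem i
    have hyR : y ∈ R.toSet := hγmem i
    have hxc : dist x Q.center ≤ c * s / 2 := by
      have := DyadicCube.dist_center_le hxQ
      rw [hQside] at this
      nlinarith
    have hyc : dist y Q.center ≤ d + c * s / 2 := by
      calc dist y Q.center ≤ dist y x + dist x Q.center := dist_triangle _ _ _
        _ ≤ d + c * s / 2 := by rw [← hd]; linarith
    have hyc2 : d - c * s / 2 ≤ dist y Q.center := by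
      have := dist_triangle y Q.center x
      have h2 := DyadicCube.dist_center_le hxQ
      rw [hQside] at h2
      have h3 : dist Q.center x = dist x Q.center := dist_comm _ _
      have h4 : d ≤ dist y Q.center + dist x Q.center := by
        rw [hd]
        calc dist y x ≤ dist y Q.center + dist Q.center x := dist_triangle _ _ _
          _ = dist y Q.center + dist x Q.center := by rw [h3]
      linarith
    have hyA : y ∈ conAnnulus V α Q := by
      refine ⟨⟨?_, ?_⟩, ?_⟩
      · exact Set.mem_biUnion hxQ hbad
      · rw [mem_closedBall, hrad]
        nlinarith
      · rw [mem_ball, not_lt, hrad]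
        nlinarith
    have hRmem : R ∈ discAnnulus V α Q := by
      rw [discAnnulus, Set.mem_setOf_eq]
      exact ⟨by rw [hRside, hQside], ⟨y, hyR, hyA⟩⟩
    have hμR : μ R.toSet = 0 := h Q (hβS i) R (hγS i) hRmem
    have hRN : R ∈ {R : DyadicCube n | R ∈ S ∧ μ R.toSet = 0} := ⟨hγS i, hμR⟩
    exact hyN (Set.mem_biUnion hRN hyR)
  -- build the Lipschitz graph
  set P : E n →L[ℝ] V := orthogonalProjection V with hP
  set Pp : E n →L[ℝ] ↥Vᗮ := orthogonalProjection Vᗮ with hPp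
  set L' := leavesOf top S \ N with hL'
  set G : Set (↥V × ↥Vᗮ) := (fun x => (P x, Pp x)) '' L' with hG
  have hcompat : ∀ p ∈ G, ∀ q ∈ G, dist p.2 q.2 ≤ α * dist p.1 q.1 := by
    rintro p ⟨x, hx, rfl⟩ q ⟨y, hy, rfl⟩
    have hnb : (x - y) ∉ badCone V α := hgeo y hy.1 x hx.1 hx.2
    rw [not_badCone_iff] at hnb
    have e1 : dist (Pp x) (Pp y) = ‖(orthogonalProjection Vᗮ (x - y) : E n)‖ := by
      rw [dist_eq_norm, ← map_sub]
      rfl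
    have e2 : dist (P x) (P y) = ‖(orthogonalProjection V (x - y) : E n)‖ := by
      rw [dist_eq_norm, ← map_sub]
      rfl
    rw [e1, e2]
    exact hnb
  obtain ⟨f, hf, hfq⟩ := kirszbraun_extend' α hα.le G hcompat
  refine ⟨f, hf, ?_⟩
  refine measure_mono_null ?_ hμN
  intro z hz
  by_contra hzN
  have hzL' : z ∈ L' := ⟨hz.1, hzN⟩
  apply hz.2
  refine ⟨P z, ?_⟩
  have hfz : f (P z) = Pp z := hfq (P z, Pp z) ⟨z, hzL', rfl⟩
  rw [hfz]
  have := orthogonalProjection_orthogonal_val (K := V) z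
  rw [hPp, hP]
  rw [this]
  abel

end MainProof

theorem statement4 {n m : ℕ} (hm : 1 ≤ m) (hmn : m ≤ n - 1)
    (S : Set (DyadicCube n)) (top : DyadicCube n) (hS : IsDyadicTree S top)
    (μ : Measure (E n)) [IsLocallyFiniteMeasure μ]
    (V : Submodule ℝ (E n)) (hV : Module.finrank ℝ V = m) (α : ℝ) (hα : 0 < α)
    (h : ∀ Q ∈ S, ∀ R ∈ S, R ∈ discAnnulus V α Q → μ R.toSet = 0) :
    ∃ f : V → Vᗮ, LipBound V α f ∧ μ (leavesOf top S \ graphOf V f) = 0 := by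
  exact statement4' hm hmn S top hS μ V hV α hα h

end
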